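/- Let S, P : ℝ → ℝ be a solution of the Type II model for t ≥ 0 with S(0) > 0 and P(0) > 0, and suppose β_v·K·v_c²·(α − δ·E_p) < δ (equivalently v_c² < δ/(β_v·K·(α − δ·E_p)) when α > δ·E_p). Then S(t) → v_c·K and P(t) → 0 as t → ∞. That is, the disease-free equilibrium (v_c·K, 0) attracts every solution with positive initial conditions (global stability of the disease-free equilibrium). -/

import Mathlib

open Filter Set


private lemma hasDerivAt_mul_exp (x : ℝ → ℝ) (hx : Differentiable ℝ x) (c t : ℝ) :
    HasDerivAt (fun s => x s * Real.exp (c * s))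
      ((deriv x t + c * x t) * Real.exp (c * t)) t := by
  have h1 : HasDerivAt x (deriv x t) t := (hx t).hasDerivAt
  have hc : HasDerivAt (fun s : ℝ => c * s) c t := by
    simpa using (hasDerivAt_id t).const_mul c
  have h2 : HasDerivAt (fun s => Real.exp (c * s)) (Real.exp (c * t) * c) t :=
    (Real.hasDerivAt_exp (c * t)).comp t hc
  have : HasDerivAt (fun s => x s * Real.exp (c * s)) _ t := h1.mul h2
  convert this using 1
  ring

private lemma growth_Icc (x : ℝ → ℝ) (hx : Differentiable ℝ x) (θ a b : ℝ) (hab : a ≤ b)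
    (hd : ∀ t ∈ Icc a b, θ * x t ≤ deriv x t) :
    x a * Real.exp (θ * (b - a)) ≤ x b := by
  set y : ℝ → ℝ := fun s => x s * Real.exp (-θ * s) with hy
  have hyd : ∀ t, HasDerivAt y ((deriv x t + -θ * x t) * Real.exp (-θ * t)) t :=
    fun t => hasDerivAt_mul_exp x hx (-θ) t
  have hydiff : Differentiable ℝ y := fun t => ((hyd t).differentiableAt)
  have hmono : MonotoneOn y (Icc a b) := by
    apply monotoneOn_of_deriv_nonneg (convex_Icc a b) hydiff.continuous.continuousOn
      (hydiff.differentiableOn)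
    intro t ht
    rw [interior_Icc] at ht
    rw [(hyd t).deriv]
    have h1 := hd t ⟨le_of_lt ht.1, le_of_lt ht.2⟩
    have h2 := Real.exp_pos (-θ * t)
    nlinarith
  have h := hmono (left_mem_Icc.mpr hab) (right_mem_Icc.mpr hab) hab
  have hpos := Real.exp_pos (θ * b)
  have h2 := mul_le_mul_of_nonneg_right h hpos.le
  have e1 : x a * Real.exp (-θ * a) * Real.exp (θ * b) = x a * Real.exp (θ * (b - a)) := by
    rw [mul_assoc, ← Real.exp_add]; ring_nf
  have e2 : x b * Real.exp (-θ * b) * Real.exp (θ * b) = x b := by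
    rw [mul_assoc, ← Real.exp_add]; ring_nf; simp
  rw [hy] at h2; simp only at h2
  calc x a * Real.exp (θ * (b - a)) = x a * Real.exp (-θ * a) * Real.exp (θ * b) := e1.symm
    _ ≤ x b * Real.exp (-θ * b) * Real.exp (θ * b) := h2
    _ = x b := e2

private lemma decay_Icc (x : ℝ → ℝ) (hx : Differentiable ℝ x) (θ a b : ℝ) (hab : a ≤ b)
    (hd : ∀ t ∈ Icc a b, deriv x t ≤ θ * x t) :
    x b ≤ x a * Real.exp (θ * (b - a)) := by
  have h := growth_Icc (fun t => -x t) hx.neg θ a b hab (by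
    intro t ht
    rw [deriv.fun_neg]
    have := hd t ht
    linarith)
  simp only [neg_mul] at h
  nlinarith [h]

private lemma linear_decay_Icc (x : ℝ → ℝ) (hx : Differentiable ℝ x) (m a b : ℝ) (hab : a ≤ b)
    (hd : ∀ t ∈ Icc a b, deriv x t ≤ m) :
    x b ≤ x a + m * (b - a) := by
  have hyd : ∀ t, HasDerivAt (fun s => x s - m * s) (deriv x t - m) t := by
    intro t
    exact ((hx t).hasDerivAt).sub (by simpa using (hasDerivAt_id t).const_mul m)
  have hydiff : Differentiable ℝ (fun s => x s - m * s) := fun t => (hyd t).differentiableAt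
  have hanti : AntitoneOn (fun s => x s - m * s) (Icc a b) := by
    apply antitoneOn_of_deriv_nonpos (convex_Icc a b) hydiff.continuous.continuousOn
      hydiff.differentiableOn
    intro t ht
    rw [interior_Icc] at ht
    rw [(hyd t).deriv]
    have := hd t ⟨le_of_lt ht.1, le_of_lt ht.2⟩
    linarith
  have := hanti (left_mem_Icc.mpr hab) (right_mem_Icc.mpr hab) hab
  simp only at this
  linarith

open Filter Set

private lemma barrier_lt (x : ℝ → ℝ) (hx : Differentiable ℝ x) (c a : ℝ) (hxa : x a < c)
    (hbd : ∀ t ≥ a, x t = c → deriv x t < 0) : ∀ t ≥ a, x t < c := by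
  intro b hb
  by_contra hcon
  push_neg at hcon
  set A : Set ℝ := Icc a b ∩ {t | c ≤ x t} with hA
  have hclosed : IsClosed A := isClosed_Icc.inter (isClosed_le continuous_const hx.continuous)
  have hne : A.Nonempty := ⟨b, ⟨⟨hb, le_refl b⟩, hcon⟩⟩
  have hbdd : BddBelow A := ⟨a, fun t ht => ht.1.1⟩
  set t0 := sInf A with ht0
  have ht0A : t0 ∈ A := hclosed.csInf_mem hne hbdd
  have ht0a : a < t0 := by
    rcases lt_or_eq_of_le ht0A.1.1 with h | h
    · exact h
    · exfalso
      have h2 : c ≤ x t0 := ht0A.2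
      rw [← h] at h2
      linarith
  have hpre : ∀ t, a ≤ t → t < t0 → x t < c := by
    intro t h1 h2
    by_contra hc2
    push_neg at hc2
    have : t ∈ A := ⟨⟨h1, le_trans h2.le ht0A.1.2⟩, hc2⟩
    exact absurd (csInf_le hbdd this) (not_le.mpr h2)
  -- x t0 = c
  have hcx : c ≤ x t0 := ht0A.2
  have hxt0 : x t0 = c := by
    rcases lt_or_eq_of_le hcx with h | h
    · exfalso
      have hcont : ContinuousAt x t0 := hx.continuous.continuousAt
      have hopen : {t | c < x t} ∈ nhds t0 := hcont.preimage_mem_nhds (Ioi_mem_nhds h)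
      obtain ⟨ε, hε, hball⟩ := Metric.mem_nhds_iff.mp hopen
      set t1 := max a (t0 - ε / 2) with ht1
      have h1 : t1 < t0 := by
        apply max_lt (by linarith) (by linarith)
      have h2 : a ≤ t1 := le_max_left _ _
      have h3 : t1 ∈ Metric.ball t0 ε := by
        rw [Metric.mem_ball, Real.dist_eq, abs_lt]
        constructor
        · have := le_max_right a (t0 - ε / 2); linarith
        · linarith
      exact absurd (hball h3) (not_lt.mpr (hpre t1 h2 h1).le)
    · exact h.symm
  have hderiv := hbd t0 (le_of_lt ht0a) hxt0
  -- left slopes nonneg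
  have hslope : Tendsto (slope x t0) (nhdsWithin t0 {t0}ᶜ) (nhds (deriv x t0)) :=
    hasDerivAt_iff_tendsto_slope.mp (hx t0).hasDerivAt
  have hslope' : Tendsto (slope x t0) (nhdsWithin t0 (Iio t0)) (nhds (deriv x t0)) :=
    hslope.mono_left (nhdsWithin_mono t0 (fun t ht => ne_of_lt ht))
  have hev : ∀ᶠ t in nhdsWithin t0 (Iio t0), 0 ≤ slope x t0 t := by
    filter_upwards [Ioo_mem_nhdsLT_of_mem (⟨ht0a, le_refl t0⟩ : t0 ∈ Ioc a t0)] with t ht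
    have hxt : x t < c := hpre t ht.1.le ht.2
    rw [slope_def_field]
    rw [div_nonneg_iff]
    right
    constructor
    · rw [hxt0]; linarith
    · linarith [ht.2]
  have : 0 ≤ deriv x t0 := ge_of_tendsto hslope' hev
  linarith

private lemma barrier_gt (x : ℝ → ℝ) (hx : Differentiable ℝ x) (c a : ℝ) (hxa : c < x a)
    (hbd : ∀ t ≥ a, x t = c → 0 < deriv x t) : ∀ t ≥ a, c < x t := by
  intro b hb
  have h := barrier_lt (fun t => -x t) hx.neg (-c) a (by simpa using hxa) (by
    intro t ht hxt
    rw [deriv.fun_neg]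
    have hxtc : x t = c := by linarith
    linarith [hbd t ht hxtc]) b hb
  linarith

private lemma pos_orbit (x h : ℝ → ℝ) (hx : Differentiable ℝ x) (b : ℝ) (hb : 0 ≤ b)
    (h0 : 0 < x 0)
    (hdx : ∀ t ∈ Icc (0:ℝ) b, deriv x t = h t * x t)
    (hcont : ∀ t0 ∈ Icc (0:ℝ) b, (∀ s ∈ Icc (0:ℝ) t0, 0 ≤ x s) → ContinuousOn h (Icc 0 t0)) :
    0 < x b := by
  by_contra hc
  push_neg at hc
  set A : Set ℝ := Icc 0 b ∩ {t | x t ≤ 0} with hA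
  have hclosed : IsClosed A := isClosed_Icc.inter (isClosed_le hx.continuous continuous_const)
  have hne : A.Nonempty := ⟨b, ⟨⟨hb, le_refl b⟩, hc⟩⟩
  have hbdd : BddBelow A := ⟨0, fun t ht => ht.1.1⟩
  set t0 := sInf A with ht0
  have ht0A : t0 ∈ A := hclosed.csInf_mem hne hbdd
  have ht0pos : 0 < t0 := by
    rcases lt_or_eq_of_le ht0A.1.1 with hlt | heq
    · exact hlt
    · exfalso
      have h2 : x t0 ≤ 0 := ht0A.2
      rw [← heq] at h2
      linarith
  have hpre : ∀ t, 0 ≤ t → t < t0 → 0 < x t := by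
    intro t h1 h2
    by_contra hc2
    push_neg at hc2
    have : t ∈ A := ⟨⟨h1, le_trans h2.le ht0A.1.2⟩, hc2⟩
    exact absurd (csInf_le hbdd this) (not_le.mpr h2)
  have hxnn : ∀ s ∈ Icc (0:ℝ) t0, 0 ≤ x s := by
    intro s hs
    rcases lt_or_eq_of_le hs.2 with h1 | h1
    · exact (hpre s hs.1 h1).le
    · -- s = t0 : limit from the left
      rw [h1]
      have hcont2 : Tendsto x (nhdsWithin t0 (Iio t0)) (nhds (x t0)) :=
        (hx.continuous.continuousAt).continuousWithinAt.tendsto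
      apply ge_of_tendsto hcont2
      filter_upwards [Ioo_mem_nhdsLT_of_mem (⟨ht0pos, le_refl t0⟩ : t0 ∈ Ioc 0 t0)] with t ht
      exact (hpre t ht.1.le ht.2).le
  -- bound h on Icc 0 t0
  have ht0mem : t0 ∈ Icc (0:ℝ) b := ht0A.1
  obtain ⟨C, hC⟩ := (isCompact_Icc (a := (0:ℝ)) (b := t0)).exists_bound_of_continuousOn
    (hcont t0 ht0mem hxnn)
  have hgrow : ∀ t ∈ Icc (0:ℝ) t0, -C * x t ≤ deriv x t := by
    intro t ht
    rw [hdx t ⟨ht.1, le_trans ht.2 ht0A.1.2⟩]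
    have h1 : -C ≤ h t := by
      have := hC t ht
      rw [Real.norm_eq_abs] at this
      linarith [abs_le.mp this]
    exact mul_le_mul_of_nonneg_right h1 (hxnn t ht)
  have := growth_Icc x hx (-C) 0 t0 ht0pos.le hgrow
  have hexp := Real.exp_pos (-C * (t0 - 0))
  have hneg : x t0 ≤ 0 := ht0A.2
  nlinarith [mul_pos h0 hexp]

set_option maxHeartbeats 2000000 in
/-- Global stability of the disease-free equilibrium of the Type II model:
if `βv·K·vc²·(α − δ·Ep) < δ`, every solution with positive initial conditions satisfies
`S(t) → vc·K` and `P(t) → 0` as `t → ∞`. -/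
theorem typeII_disease_free_global_stability (μv βv Ep K vc α δ : ℝ)
    (hμ : 0 < μv) (hβ : 0 < βv) (hE : 0 < Ep) (hK : 0 < K) (hv : 0 < vc)
    (hα : 0 < α) (hδ : 0 < δ)
    (S P : ℝ → ℝ) (hS : Differentiable ℝ S) (hP : Differentiable ℝ P)
    (hS' : ∀ t ≥ (0:ℝ),
      deriv S t = vc * μv * S t * (1 - S t / (vc * K)) -
        βv * vc * S t * P t / (1 + βv * vc * Ep * S t))
    (hP' : ∀ t ≥ (0:ℝ),
      deriv P t = α * βv * vc * S t * P t / (1 + βv * vc * Ep * S t) - δ * P t)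
    (hS0 : 0 < S 0) (hP0 : 0 < P 0)
    (hcond : βv * K * vc ^ 2 * (α - δ * Ep) < δ) :
    Tendsto S atTop (nhds (vc * K)) ∧ Tendsto P atTop (nhds 0) := by
  have hKpos : (0:ℝ) < vc * K := mul_pos hv hK
  -- Part A : positivity of S
  have hSpos : ∀ t ≥ (0:ℝ), 0 < S t := by
    intro b hb
    apply pos_orbit S
      (fun t => vc * μv * (1 - S t / (vc * K)) - βv * vc * P t / (1 + βv * vc * Ep * S t))
      hS b hb hS0
    · intro t ht
      rw [hS' t ht.1]; ring
    · intro t0 _ hxnn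
      apply ContinuousOn.sub
      · exact (continuous_const.mul (continuous_const.sub
          (hS.continuous.div_const _))).continuousOn
      · apply ContinuousOn.div
        · exact (continuous_const.mul hP.continuous).continuousOn
        · exact (continuous_const.add (continuous_const.mul hS.continuous)).continuousOn
        · intro s hs
          have h1 : 0 ≤ S s := hxnn s hs
          have : (0:ℝ) < 1 + βv * vc * Ep * S s := by
            nlinarith [mul_nonneg (mul_nonneg (mul_nonneg hβ.le hv.le) hE.le) h1]
          linarith
  have hDpos : ∀ t ≥ (0:ℝ), 0 < 1 + βv * vc * Ep * S t := by
    intro t ht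
    nlinarith [mul_nonneg (mul_nonneg (mul_nonneg hβ.le hv.le) hE.le) (hSpos t ht).le]
  -- Part B : positivity of P
  have hPpos : ∀ t ≥ (0:ℝ), 0 < P t := by
    intro b hb
    apply pos_orbit P
      (fun t => α * βv * vc * S t / (1 + βv * vc * Ep * S t) - δ)
      hP b hb hP0
    · intro t ht
      rw [hP' t ht.1]; ring
    · intro t0 ht0 _
      apply ContinuousOn.sub _ continuousOn_const
      apply ContinuousOn.div
      · exact (continuous_const.mul hS.continuous).continuousOn
      · exact (continuous_const.add (continuous_const.mul hS.continuous)).continuousOn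
      · intro s hs
        have := hDpos s hs.1
        linarith
  -- derivative of S bounded by logistic
  have hSderle : ∀ t ≥ (0:ℝ), deriv S t ≤ vc * μv * S t * (1 - S t / (vc * K)) := by
    intro t ht
    rw [hS' t ht]
    have h1 : 0 ≤ βv * vc * S t * P t / (1 + βv * vc * Ep * S t) := by
      apply div_nonneg _ (hDpos t ht).le
      have := hSpos t ht
      have := hPpos t ht
      positivity
    linarith
  -- Part C : for every c > vc*K, eventually S t < c
  have hSupper : ∀ c, vc * K < c → ∃ T ≥ (0:ℝ), ∀ t ≥ T, S t < c := by
    intro c hc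
    have hcpos : 0 < c := lt_trans hKpos hc
    have key : ∀ s : ℝ, c ≤ s →
        vc * μv * s * (1 - s / (vc * K)) ≤ -(vc * μv * c * (c / (vc * K) - 1)) := by
      intro s hs
      have e1 : vc * μv * s * (1 - s / (vc * K)) = vc * μv * s * (vc * K - s) / (vc * K) := by
        field_simp
      have e2 : -(vc * μv * c * (c / (vc * K) - 1)) = vc * μv * c * (vc * K - c) / (vc * K) := by
        field_simp
        ring
      rw [e1, e2, div_le_div_iff_of_pos_right hKpos]
      nlinarith [mul_nonneg (mul_nonneg (mul_pos hv hμ).le (by linarith : (0:ℝ) ≤ s - c))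
        (by linarith : (0:ℝ) ≤ s + c - vc * K)]
    have hm : 0 < vc * μv * c * (c / (vc * K) - 1) := by
      have : 1 < c / (vc * K) := (one_lt_div hKpos).mpr hc
      have : 0 < c / (vc * K) - 1 := by linarith
      positivity
    set m := vc * μv * c * (c / (vc * K) - 1) with hmdef
    -- there exists a time with S below c
    have hex : ∃ t1 ≥ (0:ℝ), S t1 < c := by
      by_contra hcon
      push_neg at hcon
      have hS0c : c ≤ S 0 := hcon 0 le_rfl
      obtain ⟨T, hT⟩ : ∃ T, T = (S 0 - c) / m + 1 := ⟨_, rfl⟩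
      have hT0 : 0 < T := by
        have : 0 ≤ (S 0 - c) / m := div_nonneg (by linarith) hm.le
        linarith
      have hd : ∀ t ∈ Icc (0:ℝ) T, deriv S t ≤ -m := by
        intro t ht
        exact le_trans (hSderle t ht.1) (key (S t) (hcon t ht.1))
      have hlin := linear_decay_Icc S hS (-m) 0 T hT0.le hd
      have hmT : m * ((S 0 - c) / m) = S 0 - c := by
        field_simp
      have : S T < c := by
        have : S T ≤ S 0 + -m * (T - 0) := hlin
        rw [hT] at this
        nlinarith
      exact absurd this (not_lt.mpr (hcon T hT0.le))
    obtain ⟨t1, ht1, hSt1⟩ := hex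
    refine ⟨t1, ht1, barrier_lt S hS c t1 hSt1 ?_⟩
    intro t ht htc
    have ht0 : (0:ℝ) ≤ t := le_trans ht1 ht
    rw [hS' t ht0, htc]
    have hneg : vc * μv * c * (1 - c / (vc * K)) < 0 := by
      have : 1 < c / (vc * K) := (one_lt_div hKpos).mpr hc
      have h2 : 1 - c / (vc * K) < 0 := by linarith
      have h3 : 0 < vc * μv * c := by positivity
      nlinarith
    have hpos2 : 0 < βv * vc * c * P t / (1 + βv * vc * Ep * c) := by
      apply div_pos
      · have := hPpos t ht0
        positivity
      · have := hDpos t ht0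
        rw [htc] at this
        exact this
    linarith
  -- Part D : choose c1 > vc*K with infection pressure below δ
  obtain ⟨q, hqdef⟩ : ∃ q, q = α * βv * vc - δ * (βv * vc * Ep) := ⟨_, rfl⟩
  obtain ⟨r, hrdef⟩ : ∃ r, r = δ - q * (vc * K) := ⟨_, rfl⟩
  obtain ⟨M, hMdef⟩ : ∃ M, M = max q 1 := ⟨_, rfl⟩
  have hM1 : (1:ℝ) ≤ M := hMdef ▸ le_max_right _ _
  have hMq : q ≤ M := hMdef ▸ le_max_left _ _
  have hMpos : (0:ℝ) < M := lt_of_lt_of_le one_pos hM1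
  have hr : 0 < r := by
    rw [hrdef, hqdef]
    nlinarith [hcond]
  obtain ⟨c1, hc1def⟩ : ∃ c1, c1 = vc * K + r / (2 * M) := ⟨_, rfl⟩
  have hc1 : vc * K < c1 := by
    have : 0 < r / (2 * M) := by positivity
    rw [hc1def]; linarith
  have hc1pos : 0 < c1 := lt_trans hKpos hc1
  have hFc1 : q * c1 - δ < 0 := by
    have h1 : q * r ≤ M * r := mul_le_mul_of_nonneg_right hMq hr.le
    have h3 : q * r / (2 * M) ≤ M * r / (2 * M) :=
      (div_le_div_iff_of_pos_right (by positivity : (0:ℝ) < 2 * M)).mpr h1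
    have h4 : M * r / (2 * M) = r / 2 := by
      field_simp
    have e : q * c1 - δ = (q * (vc * K) - δ) + q * r / (2 * M) := by
      rw [hc1def]; ring
    have e2 : q * (vc * K) - δ = -r := by rw [hrdef]; ring
    rw [e, e2]
    linarith
  have hD1 : 0 < 1 + βv * vc * Ep * c1 := by
    have := mul_pos (mul_pos (mul_pos hβ hv) hE) hc1pos
    linarith
  have hg1 : α * βv * vc * c1 / (1 + βv * vc * Ep * c1) < δ := by
    rw [div_lt_iff₀ hD1]
    rw [hqdef] at hFc1
    nlinarith [hFc1]
  obtain ⟨ε0, hε0def⟩ : ∃ e, e = δ - α * βv * vc * c1 / (1 + βv * vc * Ep * c1) := ⟨_, rfl⟩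
  have hε0 : 0 < ε0 := by rw [hε0def]; linarith
  obtain ⟨T0, hT00, hT0lt⟩ := hSupper c1 hc1
  have hPdec : ∀ t ≥ T0, deriv P t ≤ -ε0 * P t := by
    intro t ht
    have ht0 : (0:ℝ) ≤ t := le_trans hT00 ht
    rw [hP' t ht0]
    have hDt := hDpos t ht0
    have hSt := hSpos t ht0
    have hPt := hPpos t ht0
    have hg : α * βv * vc * S t / (1 + βv * vc * Ep * S t)
        ≤ α * βv * vc * c1 / (1 + βv * vc * Ep * c1) := by
      rw [div_le_div_iff₀ hDt hD1]
      have hkey : (0:ℝ) ≤ α * βv * vc * (c1 - S t) :=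
        mul_nonneg (mul_nonneg (mul_nonneg hα.le hβ.le) hv.le)
          (by linarith [hT0lt t ht])
      linarith [hkey]
    have e : α * βv * vc * S t * P t / (1 + βv * vc * Ep * S t)
        = (α * βv * vc * S t / (1 + βv * vc * Ep * S t)) * P t := by ring
    rw [e]
    have h5 := mul_le_mul_of_nonneg_right hg hPt.le
    have eε : -ε0 * P t = (α * βv * vc * c1 / (1 + βv * vc * Ep * c1) - δ) * P t := by
      rw [hε0def]; ring
    rw [eε]
    linarith [h5]
  have hPbound : ∀ t ≥ T0, P t ≤ P T0 * Real.exp (-ε0 * (t - T0)) :=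
    fun t ht => decay_Icc P hP (-ε0) T0 t ht (fun s hs => hPdec s hs.1)
  have hPtend : Tendsto P atTop (nhds 0) := by
    have h1 : Tendsto (fun t : ℝ => -ε0 * (t - T0)) atTop atBot := by
      apply (tendsto_const_mul_atBot_of_neg (by linarith : -ε0 < 0)).2
      exact tendsto_atTop_add_const_right _ _ tendsto_id
    have h2 : Tendsto (fun t : ℝ => P T0 * Real.exp (-ε0 * (t - T0))) atTop (nhds 0) := by
      have := (Real.tendsto_exp_atBot.comp h1).const_mul (P T0)
      simpa using this
    apply tendsto_of_tendsto_of_tendsto_of_le_of_le' tendsto_const_nhds h2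
    · filter_upwards [eventually_ge_atTop (0:ℝ)] with t ht
      exact (hPpos t ht).le
    · filter_upwards [eventually_ge_atTop T0] with t ht
      exact hPbound t ht
  -- Part E : S tends to vc*K
  refine ⟨?_, hPtend⟩
  rw [Metric.tendsto_atTop]
  intro η hη
  obtain ⟨ρ, hρdef⟩ : ∃ ρ, ρ = min η (vc * K / 2) := ⟨_, rfl⟩
  have hρpos : 0 < ρ := by rw [hρdef]; positivity
  have hρη : ρ ≤ η := hρdef ▸ min_le_left _ _
  have hρK : ρ ≤ vc * K / 2 := hρdef ▸ min_le_right _ _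
  obtain ⟨θ, hθdef⟩ : ∃ θ, θ = μv * ρ / K := ⟨_, rfl⟩
  have hθpos : 0 < θ := by rw [hθdef]; positivity
  obtain ⟨Tu, hTu0, hTult⟩ := hSupper (vc * K + η) (by linarith)
  have hdpos : 0 < θ / (2 * (βv * vc)) := by positivity
  have hPev : ∀ᶠ t in atTop, P t < θ / (2 * (βv * vc)) :=
    hPtend.eventually (Iio_mem_nhds hdpos)
  obtain ⟨T2', hT2'⟩ := eventually_atTop.mp hPev
  obtain ⟨T2, hT2def⟩ : ∃ T2, T2 = max T2' 0 := ⟨_, rfl⟩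
  have hT20 : (0:ℝ) ≤ T2 := hT2def ▸ le_max_right _ _
  have hT2ge : T2' ≤ T2 := hT2def ▸ le_max_left _ _
  have hgrow : ∀ t ≥ T2, S t ≤ vc * K - ρ → θ / 2 * S t ≤ deriv S t := by
    intro t ht hle
    have ht0 : (0:ℝ) ≤ t := le_trans hT20 ht
    rw [hS' t ht0]
    have hSt := hSpos t ht0
    have hPt := hPpos t ht0
    have hDt := hDpos t ht0
    have hPsm : P t < θ / (2 * (βv * vc)) := hT2' t (le_trans hT2ge ht)
    -- infection term small
    have hD1' : (1:ℝ) ≤ 1 + βv * vc * Ep * S t := by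
      have h0 : 0 ≤ βv * vc * Ep * S t :=
        mul_nonneg (mul_nonneg (mul_nonneg hβ.le hv.le) hE.le) hSt.le
      linarith
    have hi1 : βv * vc * S t * P t / (1 + βv * vc * Ep * S t) ≤ βv * vc * S t * P t := by
      apply div_le_self _ hD1'
      positivity
    have hi2 : βv * vc * S t * P t ≤ S t * (θ / 2) := by
      have h1 : βv * vc * S t * P t ≤ βv * vc * S t * (θ / (2 * (βv * vc))) := by
        apply mul_le_mul_of_nonneg_left hPsm.le
        positivity
      have h2 : βv * vc * S t * (θ / (2 * (βv * vc))) = S t * (θ / 2) := by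
        field_simp
      linarith
    -- logistic term large
    have h3 : S t / (vc * K) ≤ (vc * K - ρ) / (vc * K) :=
      (div_le_div_iff_of_pos_right hKpos).mpr hle
    have h4 : (vc * K - ρ) / (vc * K) = 1 - ρ / (vc * K) := by
      field_simp
    have h5 : ρ / (vc * K) ≤ 1 - S t / (vc * K) := by
      rw [h4] at h3; linarith
    have h6 : vc * μv * S t * (ρ / (vc * K)) ≤ vc * μv * S t * (1 - S t / (vc * K)) := by
      apply mul_le_mul_of_nonneg_left h5
      positivity
    have h7 : vc * μv * S t * (ρ / (vc * K)) = S t * θ := by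
      rw [hθdef]
      field_simp
    linarith
  -- S eventually exceeds vc*K - ρ
  have h3a : ∃ T3 ≥ T2, vc * K - ρ < S T3 := by
    by_contra hcon
    push_neg at hcon
    have hST2 : 0 < S T2 := hSpos T2 hT20
    obtain ⟨t1, ht1def⟩ : ∃ t1, t1 = T2 + 2 / θ * (vc * K / S T2) := ⟨_, rfl⟩
    have ht1ge : T2 ≤ t1 := by
      have : 0 < 2 / θ * (vc * K / S T2) := by positivity
      rw [ht1def]; linarith
    have hgr := growth_Icc S hS (θ / 2) T2 t1 ht1ge (by
      intro s hs
      exact hgrow s hs.1 (hcon s hs.1))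
    have harg : θ / 2 * (t1 - T2) = vc * K / S T2 := by
      rw [ht1def]
      field_simp
      ring
    have hexp : vc * K / S T2 ≤ Real.exp (θ / 2 * (t1 - T2)) := by
      rw [harg]
      have := Real.add_one_le_exp (vc * K / S T2)
      linarith
    have h8 : S T2 * (vc * K / S T2) ≤ S T2 * Real.exp (θ / 2 * (t1 - T2)) :=
      mul_le_mul_of_nonneg_left hexp hST2.le
    have h9 : S T2 * (vc * K / S T2) = vc * K := by
      field_simp
    have : vc * K ≤ S t1 := by
      rw [← h9]
      exact le_trans h8 hgr
    have := hcon t1 ht1ge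
    linarith
  obtain ⟨T3, hT3ge, hT3gt⟩ := h3a
  have hlower : ∀ t ≥ T3, vc * K - ρ < S t := by
    apply barrier_gt S hS (vc * K - ρ) T3 hT3gt
    intro t ht htc
    have hder := hgrow t (le_trans hT3ge ht) (le_of_eq htc)
    rw [htc] at hder
    have : 0 < θ / 2 * (vc * K - ρ) := by
      apply mul_pos (by positivity)
      linarith
    linarith
  refine ⟨max Tu T3, fun t ht => ?_⟩
  have htu : Tu ≤ t := le_trans (le_max_left _ _) ht
  have ht3 : T3 ≤ t := le_trans (le_max_right _ _) ht
  rw [Real.dist_eq, abs_lt]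
  constructor
  · have := hlower t ht3
    linarith
  · have := hTult t htu
    linarith
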